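/- For every r > 0 and λ ∈ (0,1), the equation f(p₀) = 1 has exactly one solution p₀ in the open interval (0,1): there exists a unique p₀ ∈ (0,1) with f(p₀) = 1. -/

import Mathlib

open scoped BigOperators

/-- `g r lam i x = x · r^i (1−λx)^i / ∏_{j=1}^i (r + j·x)`; for `i = 0` this is `x`. -/
noncomputable def g (r lam : ℝ) (i : ℕ) (x : ℝ) : ℝ :=
  x * r ^ i * (1 - lam * x) ^ i / ∏ j ∈ Finset.Icc 1 i, (r + (j : ℝ) * x)

/-- `f r lam x = Σ_{i=0}^∞ g_i(x)`. -/
noncomputable def f (r lam : ℝ) (x : ℝ) : ℝ := ∑' i : ℕ, g r lam i x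

section aux
variable {r lam x : ℝ}

lemma prodP_pos (hr : 0 < r) (hx : 0 < x) (i : ℕ) :
    0 < ∏ j ∈ Finset.Icc 1 i, (r + (j : ℝ) * x) :=
  Finset.prod_pos fun j _ => by positivity

lemma g_pos (hr : 0 < r) (hx : 0 < x) (hlx : lam * x < 1) (i : ℕ) :
    0 < g r lam i x := by
  unfold g
  have := prodP_pos hr hx i
  have h1 : 0 < 1 - lam * x := by linarith
  positivity

lemma g_succ (hr : 0 < r) (hx : 0 < x) (i : ℕ) :
    g r lam (i+1) x = g r lam i x * (r * (1 - lam * x) / (r + ((i:ℝ)+1) * x)) := by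
  unfold g
  rw [Finset.prod_Icc_succ_top (Nat.le_add_left 1 i)]
  have hP : (∏ j ∈ Finset.Icc 1 i, (r + (j : ℝ) * x)) ≠ 0 := (prodP_pos hr hx i).ne'
  have hd : r + ((i:ℝ)+1) * x ≠ 0 := by positivity
  push_cast
  field_simp
  ring

end aux
section aux2
variable {r lam x : ℝ}

lemma phi_pos (hr : 0 < r) (hx : 0 < x) (hlx : lam * x < 1) (j : ℝ) (hj : 0 ≤ j) :
    0 < r * (1 - lam * x) / (r + (j+1) * x) := by
  have h1 : 0 < 1 - lam * x := by linarith
  have : 0 < r + (j+1) * x := by positivity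
  positivity

lemma phi_lt_one (hr : 0 < r) (hx : 0 < x) (hlam0 : 0 ≤ lam) (j : ℝ) (hj : 0 ≤ j) :
    r * (1 - lam * x) / (r + (j+1) * x) < 1 := by
  have hd : 0 < r + (j+1) * x := by positivity
  rw [div_lt_one hd]
  nlinarith [mul_nonneg (mul_nonneg hr.le hlam0) hx.le, mul_nonneg hj hx.le]

lemma g_zero : g r lam 0 x = x := by
  simp [g]

lemma g_le (hr : 0 < r) (hx : 0 < x) (hlx : lam * x < 1) (hlam0 : 0 ≤ lam) (i : ℕ) :
    g r lam i x ≤ x := by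
  induction i with
  | zero => simp [g]
  | succ n ih =>
    rw [g_succ hr hx]
    have hp := g_pos hr hx hlx n
    have h1 := phi_lt_one hr hx hlam0 (n : ℝ) (Nat.cast_nonneg n)
    nlinarith

lemma phi_le (hr : 0 < r) (hx : 0 < x) (hlx : lam * x < 1) (hlam0 : 0 ≤ lam) (j : ℝ) (hj : 0 ≤ j) :
    r * (1 - lam * x) / (r + (j+1) * x) ≤ r / ((j+1) * x) := by
  have hd : 0 < r + (j+1) * x := by positivity
  have hd2 : 0 < (j+1) * x := by positivity
  rw [div_le_div_iff₀ hd hd2]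
  have h1 : 1 - lam * x ≤ 1 := by nlinarith
  nlinarith [mul_pos hr hd2]

lemma summable_g (hr : 0 < r) (hx : 0 < x) (hlx : lam * x < 1) (hlam0 : 0 ≤ lam) :
    Summable (fun i => g r lam i x) := by
  apply summable_of_ratio_norm_eventually_le (r := 1/2) (by norm_num)
  filter_upwards [Filter.eventually_ge_atTop (Nat.ceil (2 * r / x))] with i hi
  have hp := g_pos hr hx hlx i
  have hp1 := g_pos hr hx hlx (i+1)
  rw [Real.norm_eq_abs, Real.norm_eq_abs, abs_of_pos hp1, abs_of_pos hp, g_succ hr hx]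
  have hii : 2 * r / x ≤ (i : ℝ) := le_trans (Nat.le_ceil _) (by exact_mod_cast hi)
  have h2r : 2 * r ≤ (i : ℝ) * x := by
    rwa [div_le_iff₀ hx] at hii
  have hphile : r * (1 - lam * x) / (r + ((i:ℝ)+1) * x) ≤ 1/2 := by
    have hd : 0 < r + ((i:ℝ)+1) * x := by positivity
    rw [div_le_iff₀ hd]
    nlinarith [mul_nonneg (mul_nonneg hr.le hlam0) hx.le]
  have := phi_pos hr hx hlx (i:ℝ) (Nat.cast_nonneg i)
  nlinarith

lemma summable_ig (hr : 0 < r) (hx : 0 < x) (hlx : lam * x < 1) (hlam0 : 0 ≤ lam) :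
    Summable (fun i : ℕ => (i:ℝ) * g r lam i x) := by
  apply summable_of_ratio_norm_eventually_le (r := 1/2) (by norm_num)
  filter_upwards [Filter.eventually_ge_atTop (max 1 (Nat.ceil (4 * r / x)))] with i hi
  have hi1 : 1 ≤ i := le_of_max_le_left hi
  have hi2 : Nat.ceil (4 * r / x) ≤ i := le_of_max_le_right hi
  have hp := g_pos hr hx hlx i
  have hp1 := g_pos hr hx hlx (i+1)
  have hii : 4 * r / x ≤ (i : ℝ) := le_trans (Nat.le_ceil _) (by exact_mod_cast hi2)
  have h4r : 4 * r ≤ (i : ℝ) * x := by rwa [div_le_iff₀ hx] at hii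
  have hi1R : (1:ℝ) ≤ (i:ℝ) := by exact_mod_cast hi1
  have hphile : r * (1 - lam * x) / (r + ((i:ℝ)+1) * x) ≤ 1/4 := by
    have hd : 0 < r + ((i:ℝ)+1) * x := by positivity
    rw [div_le_iff₀ hd]
    nlinarith [mul_nonneg (mul_nonneg hr.le hlam0) hx.le]
  have hphipos := phi_pos hr hx hlx (i:ℝ) (Nat.cast_nonneg i)
  rw [Real.norm_eq_abs, Real.norm_eq_abs, g_succ hr hx]
  have e1 : 0 ≤ ((i:ℝ)+1) * (g r lam i x * (r * (1 - lam * x) / (r + ((i:ℝ)+1) * x))) := by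
    positivity
  have e2 : 0 ≤ (i:ℝ) * g r lam i x := by positivity
  push_cast
  rw [abs_of_nonneg e1, abs_of_nonneg e2]
  have key : ((i:ℝ)+1) * (r * (1 - lam * x) / (r + ((i:ℝ)+1) * x)) ≤ 1/2 * (i:ℝ) := by
    nlinarith
  nlinarith

end aux2
section ident
variable {r lam x : ℝ}

set_option maxHeartbeats 1000000 in
lemma mean_identity (hr : 0 < r) (hx : 0 < x) (hlx : lam * x < 1) (hlam0 : 0 ≤ lam) :
    ∑' i : ℕ, (i:ℝ) * g r lam i x = r * (1 - lam * f r lam x) := by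
  have hG := summable_g hr hx hlx hlam0
  have hiG := summable_ig hr hx hlx hlam0
  have hshift : Summable (fun i : ℕ => g r lam (i+1) x) := (summable_nat_add_iff 1).2 hG
  set S := ∑' i : ℕ, (i:ℝ) * g r lam i x with hS
  have hfx : f r lam x = x + ∑' i : ℕ, g r lam (i+1) x := by
    rw [f, Summable.tsum_eq_zero_add hG, g_zero]
  have hSs : S = ∑' i : ℕ, ((i:ℝ)+1) * g r lam (i+1) x := by
    rw [hS, Summable.tsum_eq_zero_add hiG]
    push_cast
    simp
  have hpt : ∀ i : ℕ, x * (((i:ℝ)+1) * g r lam (i+1) x)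
      = r * (1 - lam * x) * g r lam i x - r * g r lam (i+1) x := by
    intro i
    have hd : (0:ℝ) < r + ((i:ℝ)+1) * x := by positivity
    have := g_succ (lam := lam) hr hx i
    have hmul : g r lam (i+1) x * (r + ((i:ℝ)+1) * x) = g r lam i x * (r * (1 - lam * x)) := by
      rw [this]; field_simp
    linear_combination hmul
  have hxS : x * S = r * (1 - lam * x) * f r lam x - r * (f r lam x - x) := by
    rw [hSs, ← tsum_mul_left]
    have h1 : Summable (fun i : ℕ => r * (1 - lam * x) * g r lam i x) := hG.mul_left _
    have h2 : Summable (fun i : ℕ => r * g r lam (i+1) x) := hshift.mul_left r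
    calc ∑' i : ℕ, x * (((i:ℝ)+1) * g r lam (i+1) x)
        = ∑' i : ℕ, (r * (1 - lam * x) * g r lam i x - r * g r lam (i+1) x) := by
          exact tsum_congr hpt
      _ = (∑' i : ℕ, r * (1 - lam * x) * g r lam i x) - ∑' i : ℕ, r * g r lam (i+1) x :=
          Summable.tsum_sub h1 h2
      _ = r * (1 - lam * x) * f r lam x - r * (f r lam x - x) := by
          rw [tsum_mul_left, tsum_mul_left]
          rw [f]
          have : ∑' i : ℕ, g r lam (i+1) x = (∑' i : ℕ, g r lam i x) - x := by
            rw [← f, hfx]; ring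
          rw [this]
  have hxne : x ≠ 0 := hx.ne'
  have : x * S = x * (r * (1 - lam * f r lam x)) := by rw [hxS]; ring
  exact mul_left_cancel₀ hxne this

end ident
section uniq
variable {r lam : ℝ}

lemma uniq_aux (hr : 0 < r) (hlam : lam ∈ Set.Ioo (0:ℝ) 1) {a b : ℝ}
    (ha : a ∈ Set.Ioo (0:ℝ) 1) (hb : b ∈ Set.Ioo (0:ℝ) 1) (hab : a < b)
    (hfa : f r lam a = 1) (hfb : f r lam b = 1) : False := by
  obtain ⟨hl0, hl1⟩ := hlam
  obtain ⟨ha0, ha1⟩ := ha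
  obtain ⟨hb0, hb1⟩ := hb
  have hlxa : lam * a < 1 := by nlinarith
  have hlxb : lam * b < 1 := by nlinarith
  have hGa := summable_g (lam := lam) hr ha0 hlxa hl0.le
  have hGb := summable_g (lam := lam) hr hb0 hlxb hl0.le
  have hiGa := summable_ig (lam := lam) hr ha0 hlxa hl0.le
  have hiGb := summable_ig (lam := lam) hr hb0 hlxb hl0.le
  -- single crossing
  have step : ∀ i : ℕ, g r lam i b < g r lam i a → g r lam (i+1) b < g r lam (i+1) a := by
    intro i hi
    rw [g_succ (lam := lam) hr ha0 i, g_succ (lam := lam) hr hb0 i]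
    have hphib := phi_pos (x := b) hr hb0 hlxb (i:ℝ) (Nat.cast_nonneg i)
    have hgbpos := g_pos (lam := lam) hr hb0 hlxb i
    have hphilt : r * (1 - lam * b) / (r + ((i:ℝ)+1) * b) < r * (1 - lam * a) / (r + ((i:ℝ)+1) * a) := by
      have hda : (0:ℝ) < r + ((i:ℝ)+1) * a := by positivity
      have hdb : (0:ℝ) < r + ((i:ℝ)+1) * b := by positivity
      rw [div_lt_div_iff₀ hdb hda]
      have hba : (0:ℝ) < b - a := by linarith
      have key : 0 < r * ((b - a) * (r * lam + ((i:ℝ)+1))) := by positivity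
      nlinarith [key]
    exact mul_lt_mul'' hi hphilt hgbpos.le hphib.le
  have hK : ∃ i : ℕ, g r lam i b < g r lam i a := by
    by_contra hc
    push_neg at hc
    have hlt : f r lam a < f r lam b := by
      apply Summable.tsum_lt_tsum (i := 0) hc _ hGa hGb
      rw [g_zero, g_zero]; exact hab
    rw [hfa, hfb] at hlt; exact lt_irrefl 1 hlt
  classical
  set k₀ := Nat.find hK with hk₀def
  have hk0 : g r lam k₀ b < g r lam k₀ a := Nat.find_spec hK
  have hmin : ∀ i, i < k₀ → g r lam i a ≤ g r lam i b := by
    intro i hi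
    have := Nat.find_min hK hi
    linarith [not_lt.mp this]
  have hk0pos : 0 < k₀ := by
    rcases Nat.eq_zero_or_pos k₀ with h | h
    · exfalso
      rw [h] at hk0
      rw [g_zero, g_zero] at hk0
      linarith
    · exact h
  have hge : ∀ i, k₀ ≤ i → g r lam i b < g r lam i a := by
    intro i hi
    induction i, hi using Nat.le_induction with
    | base => exact hk0
    | succ n hn ih => exact step n ih
  set c : ℝ := (k₀ : ℝ) - 1/2 with hcdef
  have hcpos : 0 < c := by
    have : (1:ℝ) ≤ (k₀:ℝ) := by exact_mod_cast hk0pos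
    rw [hcdef]; linarith
  set F : ℕ → ℝ := fun i => ((i:ℝ) - c) * (g r lam i a - g r lam i b) with hFdef
  have hFnonneg : ∀ i, 0 ≤ F i := by
    intro i
    rcases lt_or_ge i k₀ with h | h
    · have h1 : (i:ℝ) - c ≤ 0 := by
        have : (i:ℝ) + 1 ≤ (k₀:ℝ) := by exact_mod_cast h
        rw [hcdef]; linarith
      have h2 : g r lam i a - g r lam i b ≤ 0 := by linarith [hmin i h]
      have hm := mul_nonneg (neg_nonneg.2 h1) (neg_nonneg.2 h2)
      simp only [hFdef]
      nlinarith [hm]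
    · have h1 : (0:ℝ) ≤ (i:ℝ) - c := by
        have : (k₀:ℝ) ≤ (i:ℝ) := by exact_mod_cast h
        rw [hcdef]; linarith
      have h2 : 0 ≤ g r lam i a - g r lam i b := by linarith [hge i h]
      exact mul_nonneg h1 h2
  have hF0 : 0 < F 0 := by
    have : F 0 = (0 - c) * (a - b) := by rw [hFdef]; simp [g_zero]
    rw [this]
    exact mul_pos_of_neg_of_neg (by linarith) (by linarith)
  have hFsummable : Summable F := by
    have : F = fun i : ℕ => (((i:ℝ) * g r lam i a - (i:ℝ) * g r lam i b)
        - (c * g r lam i a - c * g r lam i b)) := by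
      funext i; rw [hFdef]; ring
    rw [this]
    exact ((hiGa.sub hiGb).sub ((hGa.mul_left c).sub (hGb.mul_left c)))
  have htsumF : ∑' i, F i = 0 := by
    have e : ∑' i, F i = ((∑' i : ℕ, (i:ℝ) * g r lam i a) - (∑' i : ℕ, (i:ℝ) * g r lam i b))
        - (c * f r lam a - c * f r lam b) := by
      simp only [f]
      rw [← tsum_mul_left (a := c) (f := fun i => g r lam i a),
          ← tsum_mul_left (a := c) (f := fun i => g r lam i b)]
      rw [← Summable.tsum_sub hiGa hiGb, ← Summable.tsum_sub (hGa.mul_left c) (hGb.mul_left c),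
          ← Summable.tsum_sub (hiGa.sub hiGb) ((hGa.mul_left c).sub (hGb.mul_left c))]
      apply tsum_congr
      intro i; rw [hFdef]; ring
    rw [e, mean_identity hr ha0 hlxa hl0.le, mean_identity hr hb0 hlxb hl0.le, hfa, hfb]
    ring
  have := Summable.tsum_pos hFsummable hFnonneg 0 hF0
  rw [htsumF] at this
  exact lt_irrefl 0 this

end uniq
section cont
variable {r lam : ℝ}

lemma g_eq_prod (hr : 0 < r) {x : ℝ} (hx : 0 < x) (i : ℕ) :
    g r lam i x = x * ∏ j ∈ Finset.Icc 1 i, (r * (1 - lam * x) / (r + (j:ℝ) * x)) := by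
  unfold g
  rw [Finset.prod_div_distrib, Finset.prod_const, Nat.card_Icc]
  simp only [Nat.add_sub_cancel]
  rw [mul_pow]
  ring

lemma summable_u (hr : 0 < r) {a : ℝ} (ha : 0 < a) :
    Summable (fun i : ℕ => ∏ j ∈ Finset.Icc 1 i, (r / (r + (j:ℝ) * a))) := by
  apply summable_of_ratio_norm_eventually_le (r := 1/2) (by norm_num)
  filter_upwards [Filter.eventually_ge_atTop (Nat.ceil (2 * r / a))] with i hi
  have hii : 2 * r / a ≤ (i : ℝ) := le_trans (Nat.le_ceil _) (by exact_mod_cast hi)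
  have h2r : 2 * r ≤ (i : ℝ) * a := by rwa [div_le_iff₀ ha] at hii
  have hu : (0:ℝ) < ∏ j ∈ Finset.Icc 1 i, (r / (r + (j:ℝ) * a)) :=
    Finset.prod_pos fun j _ => by positivity
  rw [Finset.prod_Icc_succ_top (Nat.le_add_left 1 i)]
  have hd : (0:ℝ) < r + ((i:ℝ)+1) * a := by positivity
  have hrat : r / (r + ((i:ℝ)+1) * a) ≤ 1/2 := by
    rw [div_le_iff₀ hd]; nlinarith
  rw [Real.norm_eq_abs, Real.norm_eq_abs, abs_of_pos (mul_pos hu (by positivity)), abs_of_pos hu]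
  push_cast
  calc (∏ j ∈ Finset.Icc 1 i, (r / (r + (j:ℝ) * a))) * (r / (r + ((i:ℝ)+1) * a))
      ≤ (∏ j ∈ Finset.Icc 1 i, (r / (r + (j:ℝ) * a))) * (1/2) := by
        apply mul_le_mul_of_nonneg_left hrat hu.le
    _ = 1/2 * ∏ j ∈ Finset.Icc 1 i, (r / (r + (j:ℝ) * a)) := by ring

lemma f_contOn (hr : 0 < r) (hlam : lam ∈ Set.Ioo (0:ℝ) 1) {a : ℝ} (ha : 0 < a) (ha1 : a < 1) :
    ContinuousOn (f r lam) (Set.Icc a 1) := by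
  obtain ⟨hl0, hl1⟩ := hlam
  have hf : f r lam = fun x => ∑' i : ℕ, g r lam i x := rfl
  rw [hf]
  have hu := summable_u hr ha
  apply (tendstoUniformlyOn_tsum hu ?_).continuousOn
  · apply Filter.Frequently.of_forall
    intro t
    apply continuousOn_finset_sum
    intro i _
    apply ContinuousOn.div
    · exact (Continuous.continuousOn (by continuity))
    · exact (Continuous.continuousOn (continuous_finset_prod _ (fun j _ => by continuity)))
    · intro x hx
      exact (prodP_pos hr (lt_of_lt_of_le ha hx.1) i).ne'
  · intro i x hx
    obtain ⟨hxa, hx1⟩ := hx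
    have hx0 : 0 < x := lt_of_lt_of_le ha hxa
    have hlx : lam * x < 1 := by nlinarith
    have hgpos := g_pos (lam := lam) hr hx0 hlx i
    rw [Real.norm_eq_abs, abs_of_pos hgpos, g_eq_prod hr hx0]
    have hprodle : (∏ j ∈ Finset.Icc 1 i, (r * (1 - lam * x) / (r + (j:ℝ) * x)))
        ≤ ∏ j ∈ Finset.Icc 1 i, (r / (r + (j:ℝ) * a)) := by
      apply Finset.prod_le_prod
      · intro j hj
        have h1 : 0 < 1 - lam * x := by linarith
        have : (0:ℝ) < r + (j:ℝ) * x := by positivity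
        positivity
      · intro j hj
        have hj1 : 1 ≤ j := (Finset.mem_Icc.mp hj).1
        have hj1R : (1:ℝ) ≤ (j:ℝ) := by exact_mod_cast hj1
        have hdx : (0:ℝ) < r + (j:ℝ) * x := by positivity
        have hda : (0:ℝ) < r + (j:ℝ) * a := by positivity
        rw [div_le_div_iff₀ hdx hda]
        have hax : a ≤ x := hxa
        have t1 : r * (1 - lam * x) ≤ r := by
          nlinarith [mul_nonneg (mul_nonneg hl0.le hx0.le) hr.le]
        have t2 : r * (1 - lam * x) * (r + (j:ℝ) * a) ≤ r * (r + (j:ℝ) * a) :=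
          mul_le_mul_of_nonneg_right t1 hda.le
        have t3 : r + (j:ℝ) * a ≤ r + (j:ℝ) * x := by
          nlinarith [mul_le_mul_of_nonneg_left hax (by positivity : (0:ℝ) ≤ (j:ℝ))]
        have t4 : r * (r + (j:ℝ) * a) ≤ r * (r + (j:ℝ) * x) :=
          mul_le_mul_of_nonneg_left t3 hr.le
        linarith
    have hprodpos : (0:ℝ) ≤ ∏ j ∈ Finset.Icc 1 i, (r * (1 - lam * x) / (r + (j:ℝ) * x)) := by
      apply Finset.prod_nonneg
      intro j hj
      have h1 : 0 < 1 - lam * x := by linarith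
      have : (0:ℝ) < r + (j:ℝ) * x := by positivity
      positivity
    calc x * ∏ j ∈ Finset.Icc 1 i, (r * (1 - lam * x) / (r + (j:ℝ) * x))
        ≤ 1 * ∏ j ∈ Finset.Icc 1 i, (r * (1 - lam * x) / (r + (j:ℝ) * x)) :=
          mul_le_mul_of_nonneg_right hx1 hprodpos
      _ = ∏ j ∈ Finset.Icc 1 i, (r * (1 - lam * x) / (r + (j:ℝ) * x)) := one_mul _
      _ ≤ ∏ j ∈ Finset.Icc 1 i, (r / (r + (j:ℝ) * a)) := hprodle

end cont
section small
variable {r lam : ℝ}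

set_option maxHeartbeats 1000000 in
lemma f_small (hr : 0 < r) (hlam : lam ∈ Set.Ioo (0:ℝ) 1) {x : ℝ} (hx : 0 < x)
    (hxle : x ≤ 1 / (4 * ((Nat.ceil (4*r) : ℝ) + 1))) : f r lam x ≤ 1/2 := by
  obtain ⟨hl0, hl1⟩ := hlam
  set m : ℕ := Nat.ceil (4*r) with hmdef
  clear_value m
  have hm4r : 4 * r ≤ (m:ℝ) := hmdef ▸ Nat.le_ceil _
  have hmpos : (0:ℝ) < (m:ℝ) + 1 := by positivity
  have hx1 : x < 1 := by
    calc x ≤ 1 / (4 * ((m:ℝ) + 1)) := hxle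
    _ < 1 := by rw [div_lt_one (by positivity)]; nlinarith
  have hlx : lam * x < 1 := by nlinarith
  have hG := summable_g (lam := lam) hr hx hlx hl0.le
  set c : ℝ := r / (r + ((m:ℝ)+1) * x) with hcdef
  clear_value c
  have hD : (0:ℝ) < r + ((m:ℝ)+1) * x := by positivity
  have hc0 : 0 < c := by rw [hcdef]; positivity
  have hc1 : c < 1 := by
    rw [hcdef, div_lt_one hD]
    nlinarith
  have hnum : ∀ y : ℝ, 0 ≤ y → r + ((m:ℝ)+1) * x ≤ r + y * x → r * (1 - lam * x) / (r + y * x) ≤ c := by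
    intro y hy hden
    have hDy : (0:ℝ) < r + y * x := by positivity
    rw [hcdef, div_le_div_iff₀ hDy hD]
    have t1 : r * (1 - lam * x) ≤ r := by
      nlinarith [mul_nonneg (mul_nonneg hl0.le hx.le) hr.le]
    nlinarith [mul_le_mul_of_nonneg_left hden hr.le,
      mul_le_mul_of_nonneg_right t1 hD.le]
  have htail : ∀ i : ℕ, g r lam (i + (m+1)) x ≤ x * c ^ (i+1) := by
    intro i
    induction i with
    | zero =>
      have hgs := g_succ (lam := lam) hr hx m
      have hgm := g_le (lam := lam) hr hx hlx hl0.le m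
      have hphile := hnum ((m:ℝ)+1) (by positivity) (le_refl _)
      have hphipos := phi_pos (lam := lam) hr hx hlx (m:ℝ) (Nat.cast_nonneg m)
      have : g r lam (m+1) x ≤ x * c := by
        rw [hgs]
        exact mul_le_mul hgm hphile hphipos.le hx.le
      simpa using this
    | succ n ih =>
      have hgs := g_succ (lam := lam) hr hx (n + (m+1))
      have hphile : r * (1 - lam * x) / (r + (((n + (m+1) : ℕ):ℝ)+1) * x) ≤ c := by
        apply hnum
        · positivity
        · have : ((m:ℝ)+1) ≤ ((n + (m+1) : ℕ):ℝ) + 1 := by push_cast; linarith [Nat.cast_nonneg (α := ℝ) n]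
          nlinarith
      have hphipos := phi_pos (lam := lam) hr hx hlx ((n + (m+1) : ℕ):ℝ) (Nat.cast_nonneg _)
      have hgpos := g_pos (lam := lam) hr hx hlx (n + (m+1))
      have : g r lam (n + (m+1) + 1) x ≤ (x * c ^ (n+1)) * c := by
        rw [hgs]
        exact mul_le_mul ih hphile hphipos.le (by positivity)
      calc g r lam (n + 1 + (m+1)) x = g r lam (n + (m+1) + 1) x := by ring_nf
      _ ≤ (x * c ^ (n+1)) * c := this
      _ = x * c ^ (n+1+1) := by ring
  have hsplit := Summable.sum_add_tsum_nat_add (f := fun i : ℕ => g r lam i x) (m+1) hG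
  have hhead : ∑ i ∈ Finset.range (m+1), g r lam i x ≤ ((m:ℝ)+1) * x := by
    calc ∑ i ∈ Finset.range (m+1), g r lam i x
        ≤ ∑ _i ∈ Finset.range (m+1), x :=
          Finset.sum_le_sum (fun i _ => g_le (lam := lam) hr hx hlx hl0.le i)
      _ = ((m:ℝ)+1) * x := by
          rw [Finset.sum_const, Finset.card_range, nsmul_eq_mul]; push_cast; ring
  have hgeo : Summable (fun i : ℕ => x * c ^ (i+1)) := by
    have : (fun i : ℕ => x * c ^ (i+1)) = fun i : ℕ => (x*c) * c ^ i := by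
      funext i; ring
    rw [this]
    exact (summable_geometric_of_lt_one hc0.le hc1).mul_left _
  have htailsum : ∑' i : ℕ, g r lam (i + (m+1)) x ≤ r / ((m:ℝ)+1) := by
    have hsum1 : Summable (fun i : ℕ => g r lam (i + (m+1)) x) :=
      (summable_nat_add_iff (f := fun i : ℕ => g r lam i x) (m+1)).2 hG
    have h1 : ∑' i : ℕ, g r lam (i + (m+1)) x ≤ ∑' i : ℕ, x * c ^ (i+1) :=
      Summable.tsum_le_tsum htail hsum1 hgeo
    have h2 : ∑' i : ℕ, x * c ^ (i+1) = (x*c) * (1-c)⁻¹ := by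
      have e : (fun i : ℕ => x * c ^ (i+1)) = fun i : ℕ => (x*c) * c ^ i := by
        funext i; ring
      rw [e, tsum_mul_left, tsum_geometric_of_lt_one hc0.le hc1]
    have h3 : (x*c) * (1-c)⁻¹ = r / ((m:ℝ)+1) := by
      have h1c : 1 - c = (((m:ℝ)+1) * x) / (r + ((m:ℝ)+1) * x) := by
        rw [hcdef]; field_simp; ring
      rw [h1c, hcdef]
      field_simp
    rw [h2, h3] at h1
    exact h1
  have hfle : f r lam x ≤ ((m:ℝ)+1) * x + r / ((m:ℝ)+1) := by
    rw [f, ← hsplit]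
    exact add_le_add hhead htailsum
  have hb1 : ((m:ℝ)+1) * x ≤ 1/4 := by
    have := mul_le_mul_of_nonneg_left hxle hmpos.le
    calc ((m:ℝ)+1) * x ≤ ((m:ℝ)+1) * (1 / (4 * ((m:ℝ) + 1))) := this
    _ = 1/4 := by field_simp
  have hb2 : r / ((m:ℝ)+1) ≤ 1/4 := by
    rw [div_le_iff₀ hmpos]; nlinarith
  linarith

end small
section big
open Topology Filter
variable {r lam : ℝ}

lemma g_one_eval (hr : 0 < r) {x : ℝ} (hx : 0 < x) :
    g r lam 1 x = x * (r * (1 - lam * x) / (r + x)) := by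
  unfold g
  rw [show Finset.Icc 1 1 = {1} from Finset.Icc_self 1, Finset.prod_singleton]
  push_cast
  rw [pow_one, pow_one, one_mul]
  ring

lemma f_big (hr : 0 < r) (hlam : lam ∈ Set.Ioo (0:ℝ) 1) :
    ∃ xb : ℝ, xb ∈ Set.Ioo (0:ℝ) 1 ∧ 1 < f r lam xb := by
  obtain ⟨hl0, hl1⟩ := hlam
  set h : ℝ → ℝ := fun x => x + x * (r * (1 - lam * x) / (r + x)) with hhdef
  have hden : (r + (1:ℝ)) ≠ 0 := by linarith
  have hcont : ContinuousAt h 1 := by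
    apply ContinuousAt.add continuousAt_id
    apply ContinuousAt.mul continuousAt_id
    apply ContinuousAt.div
    · exact (continuous_const.mul (continuous_const.sub (continuous_const.mul continuous_id))).continuousAt
    · exact (continuous_const.add continuous_id).continuousAt
    · simpa using hden
  have h1gt : 1 < h 1 := by
    have hpos : 0 < r * (1 - lam * 1) / (r + 1) := by
      have : 0 < 1 - lam * 1 := by linarith
      positivity
    simp only [hhdef, one_mul]
    linarith
  have hev : ∀ᶠ y in 𝓝 (1:ℝ), 1 < h y := hcont.tendsto.eventually_const_lt h1gt
  have hev2 : ∀ᶠ y in 𝓝[<] (1:ℝ), 1 < h y := hev.filter_mono nhdsWithin_le_nhds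
  have hev3 : ∀ᶠ y in 𝓝[<] (1:ℝ), 0 < y :=
    (eventually_gt_nhds (show (0:ℝ) < 1 by norm_num)).filter_mono nhdsWithin_le_nhds
  have hev4 : ∀ᶠ y in 𝓝[<] (1:ℝ), y < 1 := eventually_mem_nhdsWithin
  obtain ⟨xb, ⟨hxb1, hxb0⟩, hxblt⟩ := ((hev2.and hev3).and hev4).exists
  refine ⟨xb, ⟨hxb0, hxblt⟩, ?_⟩
  have hlx : lam * xb < 1 := by nlinarith
  have hG := summable_g (lam := lam) hr hxb0 hlx hl0.le
  have hsum : ∑ i ∈ Finset.range 2, g r lam i xb ≤ f r lam xb := by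
    apply Summable.sum_le_tsum (Finset.range 2) (fun i _ => (g_pos (lam := lam) hr hxb0 hlx i).le) hG
  have heval : ∑ i ∈ Finset.range 2, g r lam i xb = h xb := by
    rw [Finset.sum_range_succ, Finset.sum_range_one, g_zero, g_one_eval hr hxb0]
  rw [heval] at hsum
  linarith

end big
theorem stmt4 (r lam : ℝ) (hr : 0 < r) (hlam : lam ∈ Set.Ioo (0:ℝ) 1) :
    ∃! p₀ : ℝ, p₀ ∈ Set.Ioo (0:ℝ) 1 ∧ f r lam p₀ = 1 := by
  obtain ⟨xb, ⟨hxb0, hxb1⟩, hfb⟩ := f_big hr hlam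
  set s : ℝ := 1 / (4 * ((Nat.ceil (4*r) : ℝ) + 1)) with hsdef
  have hspos : 0 < s := by rw [hsdef]; positivity
  set xs : ℝ := min s xb with hxsdef
  have hxs0 : 0 < xs := lt_min hspos hxb0
  have hxsle : xs ≤ xb := min_le_right _ _
  have hxs1 : xs < 1 := lt_of_le_of_lt hxsle hxb1
  have hfs : f r lam xs ≤ 1/2 := f_small hr hlam hxs0 (by rw [hxsdef]; exact (min_le_left _ _).trans_eq hsdef)
  have hcont : ContinuousOn (f r lam) (Set.Icc xs xb) :=
    (f_contOn hr hlam hxs0 hxs1).mono (Set.Icc_subset_Icc le_rfl hxb1.le)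
  have hivt := intermediate_value_Icc hxsle hcont
  have h1mem : (1:ℝ) ∈ Set.Icc (f r lam xs) (f r lam xb) := ⟨by linarith, hfb.le⟩
  obtain ⟨p, hp, hfp⟩ := hivt h1mem
  have hpmem : p ∈ Set.Ioo (0:ℝ) 1 := ⟨lt_of_lt_of_le hxs0 hp.1, lt_of_le_of_lt hp.2 hxb1⟩
  refine ⟨p, ⟨hpmem, hfp⟩, ?_⟩
  rintro y ⟨hy, hfy⟩
  rcases lt_trichotomy y p with h | h | h
  · exact absurd (uniq_aux hr hlam hy hpmem h hfy hfp) (fun x => x)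
  · exact h
  · exact absurd (uniq_aux hr hlam hpmem hy h hfp hfy) (fun x => x)
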